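/- arXiv:1607.05721 — 10 statements merged into one kernel-verified Lean document; each statement's English description precedes it below -/
import Mathlib

section
/- Let d_MUSTA₁(ν) = 1/4 + ν² − ν⁴/4. For every real ν one has the identity d_MUSTA₁(ν) − |ν| = −(1/4)·(|ν| − 1)²·(ν² + 2|ν| − 1). Consequently, d_MUSTA₁(ν) < |ν| whenever √2 − 1 < |ν| < 1, and d_MUSTA₁(ν) ≥ |ν| whenever |ν| ≤ √2 − 1; i.e. the MUSTA₁ dissipation function drops below the upwind dissipation function |ν| exactly for the larger Courant numbers √2 − 1 < |ν| < 1. -/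
/-- The scalar dissipation function of the MUSTA₁ scheme. -/
noncomputable def dMUSTA1 (ν : ℝ) : ℝ := 1/4 + ν^2 - ν^4/4

/-- Identity for `dMUSTA₁(ν) − |ν|`; consequently MUSTA₁ drops below the upwind
dissipation exactly for the larger Courant numbers `√2 − 1 < |ν| < 1`, and stays
above it for `|ν| ≤ √2 − 1`. -/
theorem musta1_vs_upwind (ν : ℝ) :
    dMUSTA1 ν - |ν| = -(1/4) * (|ν| - 1)^2 * (ν^2 + 2*|ν| - 1) ∧
    (Real.sqrt 2 - 1 < |ν| → |ν| < 1 → dMUSTA1 ν < |ν|) ∧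
    (|ν| ≤ Real.sqrt 2 - 1 → |ν| ≤ dMUSTA1 ν) := by
  have ha : |ν|^2 = ν^2 := sq_abs ν
  have h4 : ν^4 = (|ν|^2)^2 := by rw [ha]; ring
  have hid : dMUSTA1 ν - |ν| = -(1/4) * (|ν| - 1)^2 * (ν^2 + 2*|ν| - 1) := by
    unfold dMUSTA1; rw [← ha, h4]; ring
  have hs : Real.sqrt 2 ^ 2 = 2 := Real.sq_sqrt (by norm_num)
  have hs0 : (0:ℝ) ≤ Real.sqrt 2 := Real.sqrt_nonneg 2
  refine ⟨hid, ?_, ?_⟩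
  · intro h1 h2
    have hpos : ν^2 + 2*|ν| - 1 > 0 := by nlinarith
    have hsq : (0:ℝ) < (|ν|-1)^2 := by
      have := mul_pos_of_neg_of_neg (show |ν|-1 < 0 by linarith) (show |ν|-1 < 0 by linarith)
      nlinarith
    nlinarith [mul_pos hsq hpos]
  · intro h
    have hneg : ν^2 + 2*|ν| - 1 ≤ 0 := by nlinarith [abs_nonneg ν]
    nlinarith [sq_nonneg (|ν| - 1)]
end

section
/- Let ν_min < ν_max be real numbers, let α = (ν_max − ν_min − | |ν_max| − |ν_min| |)/(ν_max − ν_min)², and let d_HLLX(ν) = d_HLL(ν) + α·(ν − ν_min)(ν − ν_max). Let ν̄ = ν_max if |ν_max| ≥ |ν_min| and ν̄ = ν_min otherwise. Then d_HLLX(ν_min) = |ν_min|, d_HLLX(ν_max) = |ν_max|, and the derivative satisfies d_HLLX′(ν̄) = sign(ν̄); i.e. the HLLX (P₂) dissipation function matches the upwind dissipation |ν| in value at both extreme wave speeds and in slope at the globally fastest wave speed. -/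
/-- The HLL scalar dissipation function for wave speeds `νmin < νmax`. -/
noncomputable def dHLL (νmin νmax ν : ℝ) : ℝ :=
  (|νmin| * νmax - |νmax| * νmin) / (νmax - νmin)
    + ((|νmax| - |νmin|) / (νmax - νmin)) * ν

/-- The HLLX coefficient `α`. -/
noncomputable def alphaHLLX (νmin νmax : ℝ) : ℝ :=
  (νmax - νmin - |(|νmax| - |νmin|)|) / (νmax - νmin)^2

/-- The HLLX (P₂) scalar dissipation function. -/
noncomputable def dHLLX (νmin νmax ν : ℝ) : ℝ :=
  dHLL νmin νmax ν + alphaHLLX νmin νmax * (ν - νmin) * (ν - νmax)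

/-- The globally fastest Courant number. -/
noncomputable def nuBar (νmin νmax : ℝ) : ℝ :=
  if |νmax| ≥ |νmin| then νmax else νmin

/-- The HLLX dissipation matches the upwind dissipation `|ν|` in value at both
extreme wave speeds and in slope at the globally fastest wave speed. -/
theorem hllx_P2_conditions (νmin νmax : ℝ) (h : νmin < νmax) :
    dHLLX νmin νmax νmin = |νmin| ∧ dHLLX νmin νmax νmax = |νmax| ∧
      deriv (dHLLX νmin νmax) (nuBar νmin νmax) = Real.sign (nuBar νmin νmax) := by
  have hΔ : νmax - νmin ≠ 0 := sub_ne_zero.mpr h.ne'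
  have hd : ∀ x : ℝ, HasDerivAt (dHLLX νmin νmax)
      ((|νmax| - |νmin|) / (νmax - νmin)
        + alphaHLLX νmin νmax * ((x - νmin) + (x - νmax))) x := by
    intro x
    have h1 : HasDerivAt (fun ν : ℝ => (|νmin| * νmax - |νmax| * νmin) / (νmax - νmin)
        + ((|νmax| - |νmin|) / (νmax - νmin)) * ν)
        ((|νmax| - |νmin|) / (νmax - νmin)) x := by
      simpa using ((hasDerivAt_id x).const_mul ((|νmax| - |νmin|) / (νmax - νmin))).const_add ((|νmin| * νmax - |νmax| * νmin) / (νmax - νmin))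
    have h2 : HasDerivAt (fun ν : ℝ => alphaHLLX νmin νmax * (ν - νmin) * (ν - νmax))
        (alphaHLLX νmin νmax * ((x - νmin) + (x - νmax))) x := by
      have := (((hasDerivAt_id x).sub_const νmin).const_mul (alphaHLLX νmin νmax)).mul
        ((hasDerivAt_id x).sub_const νmax)
      exact this.congr_deriv (by simp only [id_eq]; ring)
    have := h1.add h2
    exact this
  refine ⟨?_, ?_, ?_⟩
  · simp [dHLLX, dHLL]
    field_simp
    ring
  · simp [dHLLX, dHLL]
    field_simp
    ring
  · by_cases hc : |νmax| ≥ |νmin|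
    · have hν : nuBar νmin νmax = νmax := by simp [nuBar, hc]
      have hpos : 0 < νmax := by
        by_contra hle
        push_neg at hle
        have : |νmin| > |νmax| := by
          rw [abs_of_nonpos hle, abs_of_nonpos (le_of_lt (lt_of_lt_of_le h hle))]
          linarith
        linarith
      rw [hν, (hd νmax).deriv, Real.sign_of_pos hpos]
      have habs : |(|νmax| - |νmin|)| = |νmax| - |νmin| := abs_of_nonneg (by linarith)
      rw [alphaHLLX, habs]
      field_simp
      ring
    · have hν : nuBar νmin νmax = νmin := by simp [nuBar, hc]
      push_neg at hc
      have hneg : νmin < 0 := by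
        by_contra hle
        push_neg at hle
        have : |νmin| ≤ |νmax| := by
          rw [abs_of_nonneg hle, abs_of_nonneg (le_of_lt (lt_of_le_of_lt hle h))]
          linarith
        linarith
      rw [hν, (hd νmin).deriv, Real.sign_of_neg hneg]
      have habs : |(|νmax| - |νmin|)| = |νmin| - |νmax| := by
        rw [abs_of_nonpos (by linarith)]; ring
      rw [alphaHLLX, habs]
      field_simp
      ring
end

section
/- Let ν_min < ν_max be real numbers and let ν̄ = ν_max if |ν_max| ≥ |ν_min|, else ν̄ = ν_min. There exists exactly one polynomial q of degree at most 2 satisfying the three conditions q(ν_min) = |ν_min|, q(ν_max) = |ν_max|, and q′(ν̄) = sign(ν̄), namely q(ν) = d_HLLX(ν) = d_HLL(ν) + α·(ν − ν_min)(ν − ν_max); i.e. the P₂ requirements fully determine the quadratic HLLX dissipation function. -/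
/-- The P₂ requirements (two interpolation conditions and one slope condition)
determine a unique polynomial of degree at most 2, namely the HLLX dissipation
function. -/
theorem P2_requirements_determine_hllx (νmin νmax : ℝ) (h : νmin < νmax) :
    (∃! q : Polynomial ℝ, q.degree ≤ 2 ∧
        q.eval νmin = |νmin| ∧ q.eval νmax = |νmax| ∧
        q.derivative.eval (nuBar νmin νmax) = Real.sign (nuBar νmin νmax)) ∧
    (∀ q : Polynomial ℝ, (q.degree ≤ 2 ∧
        q.eval νmin = |νmin| ∧ q.eval νmax = |νmax| ∧
        q.derivative.eval (nuBar νmin νmax) = Real.sign (nuBar νmin νmax)) →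
      ∀ ν, q.eval ν = dHLLX νmin νmax ν) := by
  have hΔ : νmax - νmin ≠ 0 := sub_ne_zero.mpr h.ne'
  set α := alphaHLLX νmin νmax with hα
  set A : ℝ := (|νmin| * νmax - |νmax| * νmin) / (νmax - νmin) + α * (νmin * νmax) with hA
  set B : ℝ := (|νmax| - |νmin|) / (νmax - νmin) - α * (νmin + νmax) with hB
  set Q : Polynomial ℝ := Polynomial.C α * Polynomial.X ^ 2 + Polynomial.C B * Polynomial.X
      + Polynomial.C A with hQ
  have hQeval : ∀ ν, Q.eval ν = dHLLX νmin νmax ν := by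
    intro ν
    simp only [hQ, Polynomial.eval_add, Polynomial.eval_mul, Polynomial.eval_pow,
      Polynomial.eval_C, Polynomial.eval_X, dHLLX, dHLL, hA, hB, ← hα]
    ring
  have hQderiv : ∀ ν, Q.derivative.eval ν = B + 2 * α * ν := by
    intro ν
    simp only [hQ]
    simp
    ring
  have hQdeg : Q.degree ≤ 2 := Polynomial.degree_quadratic_le
  have hEvalm : Q.eval νmin = |νmin| := by
    rw [hQeval, dHLLX, dHLL]
    field_simp
    ring
  have hEvalM : Q.eval νmax = |νmax| := by
    rw [hQeval, dHLLX, dHLL]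
    field_simp
    ring
  have hDeriv : Q.derivative.eval (nuBar νmin νmax) = Real.sign (nuBar νmin νmax) := by
    rw [hQderiv]
    by_cases hc : |νmax| ≥ |νmin|
    · rw [nuBar, if_pos hc]
      have hMpos : 0 < νmax := by
        rcases lt_trichotomy νmax 0 with hn | h0 | hp
        · rw [abs_of_neg hn, abs_of_neg (h.trans hn)] at hc; linarith
        · rw [h0, abs_zero] at hc
          have : νmin = 0 := abs_nonpos_iff.mp hc
          rw [h0, this] at h; exact absurd h (lt_irrefl 0)
        · exact hp
      rw [Real.sign_of_pos hMpos, hB, hα, alphaHLLX, abs_of_nonneg (sub_nonneg.mpr hc)]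
      field_simp
      ring
    · rw [nuBar, if_neg hc]
      push_neg at hc
      have hmneg : νmin < 0 := by
        rcases lt_trichotomy νmin 0 with hn | h0 | hp
        · exact hn
        · rw [h0, abs_zero] at hc; exact absurd hc (not_lt.mpr (abs_nonneg _))
        · rw [abs_of_pos hp, abs_of_pos (hp.trans h)] at hc; linarith
      rw [Real.sign_of_neg hmneg, hB, hα, alphaHLLX, abs_of_neg (sub_neg.mpr hc)]
      field_simp
      ring
  have huniq : ∀ q : Polynomial ℝ, (q.degree ≤ 2 ∧
      q.eval νmin = |νmin| ∧ q.eval νmax = |νmax| ∧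
      q.derivative.eval (nuBar νmin νmax) = Real.sign (nuBar νmin νmax)) → q = Q := by
    rintro q ⟨hdeg, h1, h2, h3⟩
    have hnd : q.natDegree < 3 :=
      lt_of_le_of_lt (Polynomial.natDegree_le_iff_degree_le.mpr hdeg) (by norm_num)
    have hrep := q.as_sum_range' 3 hnd
    have he : ∀ x : ℝ, q.eval x = q.coeff 0 + q.coeff 1 * x + q.coeff 2 * x ^ 2 := by
      intro x
      conv_lhs => rw [hrep]
      simp [Finset.sum_range_succ]
    have hd : ∀ x : ℝ, q.derivative.eval x = q.coeff 1 + 2 * q.coeff 2 * x := by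
      intro x
      conv_lhs => rw [hrep]
      simp only [Finset.sum_range_succ, Finset.sum_range_zero, zero_add, map_add,
        Polynomial.derivative_monomial, Polynomial.eval_add, Polynomial.eval_monomial]
      push_cast
      ring
    have eqm : q.coeff 0 + q.coeff 1 * νmin + q.coeff 2 * νmin ^ 2
        = A + B * νmin + α * νmin ^ 2 := by
      rw [← he νmin, h1, ← hEvalm, hQ]
      simp only [Polynomial.eval_add, Polynomial.eval_mul, Polynomial.eval_pow,
        Polynomial.eval_C, Polynomial.eval_X]
      ring
    have eqM : q.coeff 0 + q.coeff 1 * νmax + q.coeff 2 * νmax ^ 2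
        = A + B * νmax + α * νmax ^ 2 := by
      rw [← he νmax, h2, ← hEvalM, hQ]
      simp only [Polynomial.eval_add, Polynomial.eval_mul, Polynomial.eval_pow,
        Polynomial.eval_C, Polynomial.eval_X]
      ring
    have eq3 : q.coeff 1 + 2 * q.coeff 2 * nuBar νmin νmax
        = B + 2 * α * nuBar νmin νmax := by
      rw [← hd, h3, ← hDeriv, hQderiv]
    have ha2 : q.coeff 2 = α := by
      have hkey : (q.coeff 2 - α) * (νmax - νmin) ^ 2 = 0 := by
        by_cases hc : |νmax| ≥ |νmin|
        · rw [nuBar, if_pos hc] at eq3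
          linear_combination eqm - eqM + (νmax - νmin) * eq3
        · rw [nuBar, if_neg hc] at eq3
          linear_combination eqM - eqm + (νmin - νmax) * eq3
      have := (mul_eq_zero.mp hkey).resolve_right (pow_ne_zero 2 hΔ)
      linarith [this]
    have ha1 : q.coeff 1 = B := by
      by_cases hc : |νmax| ≥ |νmin|
      · rw [nuBar, if_pos hc] at eq3
        linear_combination eq3 - 2 * νmax * ha2
      · rw [nuBar, if_neg hc] at eq3
        linear_combination eq3 - 2 * νmin * ha2
    have ha0 : q.coeff 0 = A := by
      linear_combination eqM - νmax * ha1 - νmax ^ 2 * ha2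
    rw [hrep, Finset.sum_range_succ, Finset.sum_range_succ, Finset.sum_range_one,
      ha0, ha1, ha2, ← Polynomial.C_mul_X_pow_eq_monomial,
      ← Polynomial.C_mul_X_pow_eq_monomial, ← Polynomial.C_mul_X_pow_eq_monomial, hQ]
    ring
  refine ⟨⟨Q, ⟨hQdeg, hEvalm, hEvalM, hDeriv⟩, fun q hq => huniq q hq⟩, ?_⟩
  intro q hq ν
  rw [huniq q hq, hQeval]
end

section
/- Assume ν_min ≤ 0 ≤ ν_max and ν_min < ν_max, and set α = (ν_max − ν_min − | |ν_max| − |ν_min| |)/(ν_max − ν_min)², α₀ = α·|ν_min·ν_max|, α₁ = 1 − α·(|ν_max| + |ν_min|), α₂ = α. Then for every real ν the two representations of the HLLX dissipation function coincide: α₀·1 + α₁·d_HLL(ν) + α₂·ν² = d_HLL(ν) + α·(ν − ν_min)(ν − ν_max); i.e. HLLX is the weighted combination α₀·d_LF + α₁·d_HLL + α₂·d_LW of the Lax–Friedrichs, HLL, and Lax–Wendroff dissipation functions. -/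
/-- HLLX is the weighted combination `α₀·d_LF + α₁·d_HLL + α₂·d_LW` of the
Lax–Friedrichs (`1`), HLL, and Lax–Wendroff (`ν²`) dissipation functions. -/
theorem hllx_weighted_combination (νmin νmax : ℝ)
    (hmin : νmin ≤ 0) (hmax : 0 ≤ νmax) (h : νmin < νmax) :
    ∀ ν : ℝ,
      (alphaHLLX νmin νmax * |νmin * νmax|) * 1
        + (1 - alphaHLLX νmin νmax * (|νmax| + |νmin|)) * dHLL νmin νmax ν
        + alphaHLLX νmin νmax * ν^2
      = dHLL νmin νmax ν + alphaHLLX νmin νmax * (ν - νmin) * (ν - νmax) := by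
  intro ν
  have hd : νmax - νmin ≠ 0 := sub_ne_zero.mpr h.ne'
  have h1 : |νmin| = -νmin := abs_of_nonpos hmin
  have h2 : |νmax| = νmax := abs_of_nonneg hmax
  have h3 : |νmin * νmax| = -(νmin * νmax) :=
    abs_of_nonpos (mul_nonpos_of_nonpos_of_nonneg hmin hmax)
  generalize alphaHLLX νmin νmax = A
  rw [dHLL, h1, h2, h3]
  field_simp
  ring
end

section
/- Let ν_min < ν_max be real numbers. For every ν ∈ [ν_min, ν_max], the HLLX dissipation function satisfies d_HLLX(ν) ≥ |ν|; i.e. the quadratic HLLX (P₂) dissipation function automatically lies above the upwind dissipation on the whole wave-speed interval, so the HLLX scheme is monotone there. -/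
set_option maxHeartbeats 1000000

/-- The HLLX dissipation lies above the upwind dissipation `|ν|` on the whole
wave-speed interval, so the HLLX scheme is monotone there. -/
theorem hllx_monotone (νmin νmax : ℝ) (h : νmin < νmax) :
    ∀ ν ∈ Set.Icc νmin νmax, |ν| ≤ dHLLX νmin νmax ν := by
  rintro ν ⟨h1, h2⟩
  have hd : (0:ℝ) < νmax - νmin := by linarith
  have hd' : (νmax - νmin) ≠ 0 := ne_of_gt hd
  have hD2 : (0:ℝ) < (νmax - νmin)^2 := by positivity
  rw [← mul_le_mul_iff_right₀ hD2]
  have key : (νmax - νmin)^2 * dHLLX νmin νmax ν =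
      (|νmin| * νmax - |νmax| * νmin) * (νmax - νmin)
      + (|νmax| - |νmin|) * (νmax - νmin) * ν
      + (νmax - νmin - |(|νmax| - |νmin|)|) * (ν - νmin) * (ν - νmax) := by
    unfold dHLLX dHLL alphaHLLX
    field_simp
  rw [key]
  rcases abs_cases (|νmax| - |νmin|) with ⟨e0, s0⟩ | ⟨e0, s0⟩ <;>
  rcases abs_cases νmin with ⟨e1, s1⟩ | ⟨e1, s1⟩ <;>
  rcases abs_cases νmax with ⟨e2, s2⟩ | ⟨e2, s2⟩ <;>
  rcases abs_cases ν with ⟨e3, s3⟩ | ⟨e3, s3⟩ <;>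
    rw [e0, e1, e2, e3] <;> rw [e1, e2] at s0 <;>
    nlinarith [sq_nonneg (ν - νmax), sq_nonneg (ν - νmin),
      mul_nonneg (sub_nonneg.2 h1) (sub_nonneg.2 h2),
      mul_nonneg (mul_nonneg (sub_nonneg.2 h1) (sub_nonneg.2 h2)) hd.le,
      mul_nonneg (mul_nonneg (sub_nonneg.2 h1) (sub_nonneg.2 h1)) hd.le,
      mul_nonneg (mul_nonneg (sub_nonneg.2 h2) (sub_nonneg.2 h2)) hd.le]
end

section
/- Let ν_min < ν_max be real numbers. Then the coefficient α = (ν_max − ν_min − | |ν_max| − |ν_min| |)/(ν_max − ν_min)² is nonnegative, and for every ν ∈ [ν_min, ν_max] one has d_HLLX(ν) ≤ d_HLL(ν); i.e. the HLLX scheme is less dissipative than the HLL scheme on the whole wave-speed interval. -/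
/-- The coefficient `α` is nonnegative, and HLLX is less dissipative than HLL
on the whole wave-speed interval. -/
theorem hllx_le_hll (νmin νmax : ℝ) (h : νmin < νmax) :
    0 ≤ alphaHLLX νmin νmax ∧
      ∀ ν ∈ Set.Icc νmin νmax, dHLLX νmin νmax ν ≤ dHLL νmin νmax ν := by
  have halpha : 0 ≤ alphaHLLX νmin νmax := by
    apply div_nonneg
    · have := abs_abs_sub_abs_le_abs_sub νmax νmin
      rw [abs_of_nonneg (by linarith : (0:ℝ) ≤ νmax - νmin)] at this
      linarith
    · positivity
  refine ⟨halpha, fun ν hν => ?_⟩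
  have h1 : 0 ≤ ν - νmin := by linarith [hν.1]
  have h2 : ν - νmax ≤ 0 := by linarith [hν.2]
  have : alphaHLLX νmin νmax * (ν - νmin) * (ν - νmax) ≤ 0 :=
    mul_nonpos_of_nonneg_of_nonpos (mul_nonneg halpha h1) h2
  unfold dHLLX
  linarith
end

section
/- Let ν_min < ν_max be real numbers with max(|ν_min|, |ν_max|) ≤ 1 (CFL condition) and let ω ∈ [0,1]. Then for every ν ∈ [ν_min, ν_max] one has the chain of inequalities ν² ≤ d_ω(ν) ≤ d_HLLω(ν) ≤ d_HLL(ν); i.e. the HLLω scheme is L² stable and less dissipative than the HLL scheme on the whole wave-speed interval. -/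
/-- The blended (upwind / Lax–Wendroff) dissipation function `d_ω`. -/
noncomputable def dOmega (ω ν : ℝ) : ℝ := ω * ν^2 + (1 - ω) * |ν|

/-- Coefficient `b₀(ω)` of the HLLω dissipation function. -/
noncomputable def b0 (νmin νmax ω : ℝ) : ℝ :=
  (νmax * (ω * νmin^2 + (1 - ω) * |νmin|)
    - νmin * (ω * νmax^2 + (1 - ω) * |νmax|)) / (νmax - νmin)

/-- Coefficient `b₁(ω)` of the HLLω dissipation function. -/
noncomputable def b1 (νmin νmax ω : ℝ) : ℝ :=
  ((1 - ω) * (|νmax| - |νmin|) + ω * (νmax^2 - νmin^2)) / (νmax - νmin)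

/-- The affine HLLω dissipation function. -/
noncomputable def dHLLomega (νmin νmax ω ν : ℝ) : ℝ :=
  b0 νmin νmax ω + b1 νmin νmax ω * ν

set_option maxHeartbeats 1000000 in
/-- Under the CFL condition, HLLω is L² stable and less dissipative than HLL:
`ν² ≤ d_ω(ν) ≤ d_HLLω(ν) ≤ d_HLL(ν)` on the whole wave-speed interval. -/
theorem hllomega_stable_and_le_hll (νmin νmax ω : ℝ) (h : νmin < νmax)
    (hcfl : max |νmin| |νmax| ≤ 1) (hω : ω ∈ Set.Icc (0:ℝ) 1) :
    ∀ ν ∈ Set.Icc νmin νmax,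
      ν^2 ≤ dOmega ω ν ∧ dOmega ω ν ≤ dHLLomega νmin νmax ω ν ∧
        dHLLomega νmin νmax ω ν ≤ dHLL νmin νmax ν := by
  obtain ⟨hω0, hω1⟩ := hω
  have hmin1 : |νmin| ≤ 1 := le_trans (le_max_left _ _) hcfl
  have hmax1 : |νmax| ≤ 1 := le_trans (le_max_right _ _) hcfl
  have hΔ : 0 < νmax - νmin := by linarith
  intro ν hν
  obtain ⟨h1, h2⟩ := hν
  set t : ℝ := (ν - νmin) / (νmax - νmin) with ht_def
  have ht0 : 0 ≤ t := div_nonneg (by linarith) hΔ.le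
  have ht1 : t ≤ 1 := by
    rw [ht_def, div_le_one hΔ]; linarith
  have hν' : ν = (1 - t) * νmin + t * νmax := by
    rw [ht_def]; field_simp; ring
  have hν1 : |ν| ≤ 1 := by
    rw [abs_le] at hmin1 hmax1 ⊢
    constructor <;> linarith [hmin1.1, hmax1.2]
  have habs : ν ^ 2 ≤ |ν| := by
    nlinarith [sq_abs ν, abs_nonneg ν]
  have hamin : νmin ^ 2 ≤ |νmin| := by
    nlinarith [sq_abs νmin, abs_nonneg νmin]
  have hamax : νmax ^ 2 ≤ |νmax| := by
    nlinarith [sq_abs νmax, abs_nonneg νmax]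
  have key1 : dHLLomega νmin νmax ω ν
      = (1 - t) * dOmega ω νmin + t * dOmega ω νmax := by
    rw [ht_def]
    unfold dHLLomega b0 b1 dOmega
    field_simp
    ring
  have key2 : dHLL νmin νmax ν = (1 - t) * |νmin| + t * |νmax| := by
    rw [ht_def]
    unfold dHLL
    field_simp
    ring
  have hconv1 : ν ^ 2 ≤ (1 - t) * νmin ^ 2 + t * νmax ^ 2 := by
    rw [hν']
    nlinarith [mul_nonneg (mul_nonneg ht0 (by linarith : (0:ℝ) ≤ 1 - t))
      (sq_nonneg (νmax - νmin))]
  have hconv2 : |ν| ≤ (1 - t) * |νmin| + t * |νmax| := by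
    calc |ν| = |(1 - t) * νmin + t * νmax| := by rw [← hν']
    _ ≤ |(1 - t) * νmin| + |t * νmax| := abs_add_le _ _
    _ = (1 - t) * |νmin| + t * |νmax| := by
        rw [abs_mul, abs_mul, abs_of_nonneg (by linarith : (0:ℝ) ≤ 1 - t),
          abs_of_nonneg ht0]
  refine ⟨?_, ?_, ?_⟩
  · unfold dOmega
    nlinarith [mul_nonneg (by linarith : (0:ℝ) ≤ 1 - ω) (by linarith : (0:ℝ) ≤ |ν| - ν ^ 2)]
  · rw [key1]
    unfold dOmega
    nlinarith [mul_nonneg hω0 (by linarith : (0:ℝ) ≤ (1 - t) * νmin ^ 2 + t * νmax ^ 2 - ν ^ 2),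
      mul_nonneg (by linarith : (0:ℝ) ≤ 1 - ω)
        (by linarith : (0:ℝ) ≤ (1 - t) * |νmin| + t * |νmax| - |ν|)]
  · rw [key1, key2]
    unfold dOmega
    have e1 : ω * νmin ^ 2 + (1 - ω) * |νmin| ≤ |νmin| := by
      nlinarith [mul_nonneg hω0 (by linarith : (0:ℝ) ≤ |νmin| - νmin ^ 2)]
    have e2 : ω * νmax ^ 2 + (1 - ω) * |νmax| ≤ |νmax| := by
      nlinarith [mul_nonneg hω0 (by linarith : (0:ℝ) ≤ |νmax| - νmax ^ 2)]
    have := add_le_add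
      (mul_le_mul_of_nonneg_left e1 (by linarith : (0:ℝ) ≤ 1 - t))
      (mul_le_mul_of_nonneg_left e2 ht0)
    linarith
end

section
/- Let ν_min < ν_max be real numbers, ω ∈ [0,1], and let ν̄ = ν_max if |ν_max| ≥ |ν_min|, else ν̄ = ν_min. The HLLXω dissipation function d_HLLXω(ν) = d_HLLω(ν) + β(ω)·(ν − ν_min)(ν − ν_max), with β(ω) = ω + (1−ω)·α and α = (ν_max − ν_min − | |ν_max| − |ν_min| |)/(ν_max − ν_min)², satisfies the three defining conditions d_HLLXω(ν_min) = d_ω(ν_min), d_HLLXω(ν_max) = d_ω(ν_max), and d_HLLXω′(ν̄) = 2ω·ν̄ + (1−ω)·sign(ν̄) = d_ω′(ν̄), where d_ω(ν) = ω·ν² + (1−ω)·|ν|. -/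
/-- The coefficient `β(ω) = ω + (1−ω)·α`. -/
noncomputable def betaHLLX (νmin νmax ω : ℝ) : ℝ :=
  ω + (1 - ω) * alphaHLLX νmin νmax

/-- The HLLXω scalar dissipation function. -/
noncomputable def dHLLXomega (νmin νmax ω ν : ℝ) : ℝ :=
  dHLLomega νmin νmax ω ν + betaHLLX νmin νmax ω * (ν - νmin) * (ν - νmax)

lemma hasDerivAt_dHLLX (νmin νmax ω x : ℝ) :
    HasDerivAt (dHLLXomega νmin νmax ω)
      (b1 νmin νmax ω + betaHLLX νmin νmax ω * ((x - νmax) + (x - νmin))) x := by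
  have h1 : HasDerivAt (fun ν : ℝ => b0 νmin νmax ω + b1 νmin νmax ω * ν)
      (b1 νmin νmax ω) x := by
    simpa using ((hasDerivAt_id x).const_mul (b1 νmin νmax ω)).const_add (b0 νmin νmax ω)
  have h2 : HasDerivAt (fun ν : ℝ => betaHLLX νmin νmax ω * (ν - νmin) * (ν - νmax))
      (betaHLLX νmin νmax ω * ((x - νmax) + (x - νmin))) x := by
    have := (((hasDerivAt_id x).sub_const νmin).const_mul (betaHLLX νmin νmax ω)).mul
      ((hasDerivAt_id x).sub_const νmax)
    simp only [id_eq] at this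
    exact this.congr_deriv (by ring)
  exact h1.add h2

/-- HLLXω matches the blended dissipation `d_ω` in value at both extreme wave
speeds, and in slope at the globally fastest wave speed, where the common slope
equals `2ω·ν̄ + (1−ω)·sign(ν̄)`. -/
theorem hllxomega_defining_conditions (νmin νmax ω : ℝ) (h : νmin < νmax)
    (hω : ω ∈ Set.Icc (0:ℝ) 1) :
    dHLLXomega νmin νmax ω νmin = dOmega ω νmin ∧
    dHLLXomega νmin νmax ω νmax = dOmega ω νmax ∧
    deriv (dHLLXomega νmin νmax ω) (nuBar νmin νmax)
      = 2 * ω * nuBar νmin νmax + (1 - ω) * Real.sign (nuBar νmin νmax) ∧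
    deriv (dOmega ω) (nuBar νmin νmax)
      = 2 * ω * nuBar νmin νmax + (1 - ω) * Real.sign (nuBar νmin νmax) := by
  have hΔ : νmax - νmin ≠ 0 := sub_ne_zero.mpr h.ne'
  refine ⟨?_, ?_, ?_, ?_⟩
  · simp only [dHLLXomega, dHLLomega, b0, b1, dOmega, sub_self, mul_zero, zero_mul, add_zero]
    field_simp
    ring
  · simp only [dHLLXomega, dHLLomega, b0, b1, dOmega, sub_self, mul_zero, add_zero]
    field_simp
    ring
  · rw [(hasDerivAt_dHLLX νmin νmax ω (nuBar νmin νmax)).deriv]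
    by_cases hge : |νmax| ≥ |νmin|
    · have hmax : 0 < νmax := by
        by_contra h'
        push_neg at h'
        rw [abs_of_nonpos h', abs_of_nonpos (h.le.trans h')] at hge
        linarith
      have habs : |(|νmax| - |νmin|)| = |νmax| - |νmin| := abs_of_nonneg (by linarith)
      rw [nuBar, if_pos hge] at *
      rw [Real.sign_of_pos hmax, b1, betaHLLX, alphaHLLX, habs]
      field_simp
      ring
    · have hmin : νmin < 0 := by
        by_contra h'
        push_neg at h'
        rw [abs_of_nonneg h', abs_of_nonneg (h'.trans h.le)] at hge
        linarith
      have habs : |(|νmax| - |νmin|)| = -(|νmax| - |νmin|) := abs_of_neg (by linarith)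
      rw [nuBar, if_neg hge] at *
      rw [Real.sign_of_neg hmin, b1, betaHLLX, alphaHLLX, habs]
      field_simp
      ring
  · by_cases hge : |νmax| ≥ |νmin|
    · have hmax : 0 < νmax := by
        by_contra h'
        push_neg at h'
        rw [abs_of_nonpos h', abs_of_nonpos (h.le.trans h')] at hge
        linarith
      rw [nuBar, if_pos hge, Real.sign_of_pos hmax]
      have hd : HasDerivAt (dOmega ω) (2 * ω * νmax + (1 - ω) * 1) νmax := by
        have h1 : HasDerivAt (fun ν : ℝ => ω * ν ^ 2) (ω * (2 * νmax)) νmax := by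
          simpa using (hasDerivAt_pow 2 νmax).const_mul ω
        have h2 : HasDerivAt (fun ν : ℝ => (1 - ω) * |ν|) ((1 - ω) * 1) νmax :=
          (hasDerivAt_abs_pos hmax).const_mul (1 - ω)
        have := h1.add h2
        exact this.congr_deriv (by ring)
      exact hd.deriv
    · have hmin : νmin < 0 := by
        by_contra h'
        push_neg at h'
        rw [abs_of_nonneg h', abs_of_nonneg (h'.trans h.le)] at hge
        linarith
      rw [nuBar, if_neg hge, Real.sign_of_neg hmin]
      have hd : HasDerivAt (dOmega ω) (2 * ω * νmin + (1 - ω) * (-1)) νmin := by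
        have h1 : HasDerivAt (fun ν : ℝ => ω * ν ^ 2) (ω * (2 * νmin)) νmin := by
          simpa using (hasDerivAt_pow 2 νmin).const_mul ω
        have h2 : HasDerivAt (fun ν : ℝ => (1 - ω) * |ν|) ((1 - ω) * (-1)) νmin :=
          (hasDerivAt_abs_neg hmin).const_mul (1 - ω)
        have := h1.add h2
        exact this.congr_deriv (by ring)
      exact hd.deriv
end

section
/- Assume ν_min < 0 < ν_max and ω ∈ [0,1]. With β(ω) = ω + (1−ω)·α, β₀(ω) = β(ω)·(1−ω)·|ν_min·ν_max| / ((1−ω) + ω·(|ν_min| + |ν_max|)), β₁(ω) = 1 − β(ω)·((1−ω)/(|ν_min| + |ν_max|) + ω)⁻¹, and β₂(ω) = β(ω), the two representations of the HLLXω dissipation function coincide for every real ν: β₀(ω)·1 + β₁(ω)·d_HLLω(ν) + β₂(ω)·ν² = d_HLLω(ν) + β(ω)·(ν − ν_min)(ν − ν_max); i.e. HLLXω is the weighted combination β₀·d_LF + β₁·d_HLLω + β₂·d_LW of the Lax–Friedrichs, HLLω, and Lax–Wendroff dissipation functions. -/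
/-- HLLXω is the weighted combination `β₀·d_LF + β₁·d_HLLω + β₂·d_LW` of the
Lax–Friedrichs (`1`), HLLω, and Lax–Wendroff (`ν²`) dissipation functions. -/
theorem hllxomega_weighted_combination (νmin νmax ω : ℝ)
    (hmin : νmin < 0) (hmax : 0 < νmax) (hω : ω ∈ Set.Icc (0:ℝ) 1) :
    ∀ ν : ℝ,
      (betaHLLX νmin νmax ω * (1 - ω) * |νmin * νmax|
          / ((1 - ω) + ω * (|νmin| + |νmax|))) * 1
        + (1 - betaHLLX νmin νmax ω * ((1 - ω) / (|νmin| + |νmax|) + ω)⁻¹)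
            * dHLLomega νmin νmax ω ν
        + betaHLLX νmin νmax ω * ν^2
      = dHLLomega νmin νmax ω ν
          + betaHLLX νmin νmax ω * (ν - νmin) * (ν - νmax) := by
  intro ν
  obtain ⟨hω0, hω1⟩ := hω
  have hmin' : |νmin| = -νmin := abs_of_neg hmin
  have hmax' : |νmax| = νmax := abs_of_pos hmax
  have habs : |νmin * νmax| = -(νmin * νmax) := by
    rw [abs_mul, hmin', hmax']; ring
  have hs : (0:ℝ) < νmax - νmin := by linarith
  have hs' : νmax - νmin ≠ 0 := ne_of_gt hs
  have hc : (0:ℝ) < (1 - ω) / (-νmin + νmax) + ω := by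
    rcases eq_or_lt_of_le hω1 with h | h
    · rw [h]; norm_num
    · have h1 : (0:ℝ) < (1 - ω) / (-νmin + νmax) :=
        div_pos (by linarith) (by linarith)
      linarith
  have hsumpos : (0:ℝ) < -νmin + νmax := by linarith
  have hsum : -νmin + νmax ≠ 0 := ne_of_gt hsumpos
  have hd : (0:ℝ) < (1 - ω) + ω * (-νmin + νmax) := by
    have : (1 - ω) + ω * (-νmin + νmax)
        = ((1 - ω) / (-νmin + νmax) + ω) * (-νmin + νmax) := by
      field_simp
    rw [this]
    exact mul_pos hc hsumpos
  generalize betaHLLX νmin νmax ω = b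
  unfold dHLLomega b0 b1
  rw [hmin', hmax', habs]
  have hc' : (1 - ω) / (-νmin + νmax) + ω ≠ 0 := ne_of_gt hc
  have hd' : (1 - ω) + ω * (-νmin + νmax) ≠ 0 := ne_of_gt hd
  field_simp
  ring
end

section
/- Let ν_min < ν_max be real numbers with max(|ν_min|, |ν_max|) ≤ 1 (CFL condition) and let ω ∈ [0,1]. Then for every ν ∈ [ν_min, ν_max] one has d_ω(ν) ≤ d_HLLXω(ν) ≤ d_HLLX(ν), and in particular ν² ≤ d_HLLXω(ν); i.e. the HLLXω scheme is L² stable, its dissipation never drops below the blended function d_ω, and it is less dissipative than the monotone HLLX scheme on the whole wave-speed interval. -/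
/-- Key inequality: `|ν| ≤ dHLLX` on the wave-speed interval. -/
lemma key (νmin νmax ν : ℝ) (h : νmin < νmax) (h1 : νmin ≤ ν) (h2 : ν ≤ νmax) :
    |ν| ≤ dHLLX νmin νmax ν := by
  have hL : (0:ℝ) < νmax - νmin := by linarith
  have hL' : νmax - νmin ≠ 0 := ne_of_gt hL
  unfold dHLLX dHLL alphaHLLX
  rcases le_or_gt 0 νmin with hm | hm
  · have hν : 0 ≤ ν := le_trans hm h1
    rw [abs_of_nonneg hm, abs_of_nonneg (by linarith : (0:ℝ) ≤ νmax),
      abs_of_nonneg hν, abs_of_nonneg (by linarith : (0:ℝ) ≤ νmax - νmin)]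
    have : (νmin * νmax - νmax * νmin) / (νmax - νmin)
        + (νmax - νmin) / (νmax - νmin) * ν
        + (νmax - νmin - (νmax - νmin)) / (νmax - νmin) ^ 2 * (ν - νmin) * (ν - νmax) = ν := by
      field_simp
      ring
    rw [this]
  · rcases le_or_gt νmax 0 with hM | hM
    · have hν : ν ≤ 0 := le_trans h2 hM
      rw [abs_of_nonpos (le_of_lt hm), abs_of_nonpos hM, abs_of_nonpos hν,
        abs_of_nonpos (by linarith : -νmax - -νmin ≤ 0)]
      have : (-νmin * νmax - -νmax * νmin) / (νmax - νmin)
          + (-νmax - -νmin) / (νmax - νmin) * ν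
          + (νmax - νmin - -(-νmax - -νmin)) / (νmax - νmin) ^ 2 * (ν - νmin) * (ν - νmax) = -ν := by
        field_simp
        ring
      rw [this]
    · rw [abs_of_nonpos (le_of_lt hm), abs_of_nonneg (le_of_lt hM)]
      rcases le_or_gt 0 (νmax + νmin) with hs | hs
      · rw [abs_of_nonneg (by linarith : (0:ℝ) ≤ νmax - -νmin)]
        rcases le_or_gt 0 ν with hν | hν
        · rw [abs_of_nonneg hν, ← sub_nonneg]
          have hrw : (-νmin * νmax - νmax * νmin) / (νmax - νmin)
              + (νmax - -νmin) / (νmax - νmin) * ν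
              + (νmax - νmin - (νmax - -νmin)) / (νmax - νmin) ^ 2 * (ν - νmin) * (ν - νmax) - ν
              = (-2 * νmin * (ν - νmax)^2) / (νmax - νmin)^2 := by
            field_simp
            ring
          rw [hrw]
          exact div_nonneg (by nlinarith [sq_nonneg (ν - νmax)]) (sq_nonneg _)
        · rw [abs_of_nonpos (le_of_lt hν), ← sub_nonneg]
          have hrw : (-νmin * νmax - νmax * νmin) / (νmax - νmin)
              + (νmax - -νmin) / (νmax - νmin) * ν
              + (νmax - νmin - (νmax - -νmin)) / (νmax - νmin) ^ 2 * (ν - νmin) * (ν - νmax) - -ν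
              = (2 * (ν - νmin) * (νmax^2 - νmin * ν)) / (νmax - νmin)^2 := by
            field_simp
            ring
          rw [hrw]
          apply div_nonneg _ (sq_nonneg _)
          have h3 : 0 ≤ ν - νmin := by linarith
          have h4 : 0 ≤ νmax ^ 2 - νmin * ν := by nlinarith
          positivity
      · rw [abs_of_nonpos (by linarith : νmax - -νmin ≤ 0)]
        rcases le_or_gt 0 ν with hν | hν
        · rw [abs_of_nonneg hν, ← sub_nonneg]
          have hrw : (-νmin * νmax - νmax * νmin) / (νmax - νmin)
              + (νmax - -νmin) / (νmax - νmin) * ν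
              + (νmax - νmin - -(νmax - -νmin)) / (νmax - νmin) ^ 2 * (ν - νmin) * (ν - νmax) - ν
              = (2 * (νmax - ν) * (νmin^2 - νmax * ν)) / (νmax - νmin)^2 := by
            field_simp
            ring
          rw [hrw]
          apply div_nonneg _ (sq_nonneg _)
          have h3 : 0 ≤ νmax - ν := by linarith
          have h4 : 0 ≤ νmin ^ 2 - νmax * ν := by nlinarith
          positivity
        · rw [abs_of_nonpos (le_of_lt hν), ← sub_nonneg]
          have hrw : (-νmin * νmax - νmax * νmin) / (νmax - νmin)
              + (νmax - -νmin) / (νmax - νmin) * ν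
              + (νmax - νmin - -(νmax - -νmin)) / (νmax - νmin) ^ 2 * (ν - νmin) * (ν - νmax) - -ν
              = (2 * νmax * (ν - νmin)^2) / (νmax - νmin)^2 := by
            field_simp
            ring
          rw [hrw]
          exact div_nonneg (by nlinarith [sq_nonneg (ν - νmin)]) (sq_nonneg _)

lemma hllx_combo (νmin νmax ω ν : ℝ) (h : νmin < νmax) :
    dHLLXomega νmin νmax ω ν = ω * ν^2 + (1 - ω) * dHLLX νmin νmax ν := by
  have hL' : νmax - νmin ≠ 0 := sub_ne_zero.2 (ne_of_gt h)
  unfold dHLLXomega dHLLomega b0 b1 betaHLLX dHLLX dHLL alphaHLLX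
  field_simp
  ring

/-- Under the CFL condition, HLLXω is L² stable, never drops below the blended
dissipation `d_ω`, and is less dissipative than the monotone HLLX scheme on the
whole wave-speed interval. -/
theorem hllxomega_stable_and_le_hllx (νmin νmax ω : ℝ) (h : νmin < νmax)
    (hcfl : max |νmin| |νmax| ≤ 1) (hω : ω ∈ Set.Icc (0:ℝ) 1) :
    ∀ ν ∈ Set.Icc νmin νmax,
      dOmega ω ν ≤ dHLLXomega νmin νmax ω ν ∧
      dHLLXomega νmin νmax ω ν ≤ dHLLX νmin νmax ν ∧
      ν^2 ≤ dHLLXomega νmin νmax ω ν := by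
  intro ν hν
  obtain ⟨h1, h2⟩ := hν
  have hX : |ν| ≤ dHLLX νmin νmax ν := key νmin νmax ν h h1 h2
  have habs : |ν| ≤ 1 := le_trans (abs_le_max_abs_abs h1 h2) hcfl
  have hsq : ν^2 ≤ |ν| := by nlinarith [sq_abs ν, abs_nonneg ν]
  have hsq' : ν^2 ≤ dHLLX νmin νmax ν := le_trans hsq hX
  obtain ⟨hω0, hω1⟩ := hω
  rw [hllx_combo νmin νmax ω ν h]
  refine ⟨?_, ?_, ?_⟩
  · unfold dOmega
    nlinarith
  · nlinarith
  · nlinarith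
end
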